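/- Fix an integer n ≥ 4 and let s₁, s₂, s₃, … be a sequence of real numbers satisfying the characteristic recursion s_{j+1} = (n−2)s_j − s_{j−1} for all j ≥ 2. Then the sequence changes sign at most once: there do not exist indices j₁ < j₂ < j₃ with s_{j₁} > 0, s_{j₂} < 0 and s_{j₃} > 0, and there do not exist indices j₁ < j₂ < j₃ with s_{j₁} < 0, s_{j₂} > 0 and s_{j₃} < 0. -/

import Mathlib

lemma stmt_5_aux (c : ℝ) (hc : 2 ≤ c) (s : ℕ → ℝ)
    (hrec : ∀ j : ℕ, 2 ≤ j → s (j + 1) = c * s j - s (j - 1)) :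
    ¬ ∃ j₁ j₂ j₃ : ℕ, 1 ≤ j₁ ∧ j₁ < j₂ ∧ j₂ < j₃ ∧
        0 < s j₁ ∧ s j₂ < 0 ∧ 0 < s j₃ := by
  classical
  rintro ⟨j₁, j₂, j₃, h1, h12, h23, hp1, hn2, hp3⟩
  have hex : ∃ k, j₁ < k ∧ s k < 0 := ⟨j₂, h12, hn2⟩
  set m := Nat.find hex with hm_def
  obtain ⟨hm1, hmneg⟩ := Nat.find_spec hex
  have hmin : ∀ k < m, ¬(j₁ < k ∧ s k < 0) := fun k hk => Nat.find_min hex hk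
  have hm2 : 2 ≤ m := by omega
  have hprev : 0 ≤ s (m - 1) := by
    rcases eq_or_lt_of_le (Nat.le_sub_one_of_lt hm1) with h | h
    · rw [← h]; linarith
    · have := hmin (m - 1) (by omega)
      push_neg at this
      exact this h
  have key : ∀ d : ℕ, s (m + d + 1) ≤ s (m + d) ∧ s (m + d) < 0 := by
    intro d
    induction d with
    | zero =>
      have h := hrec m hm2
      simp only [Nat.add_zero]
      constructor
      · rw [h]; nlinarith
      · exact hmneg
    | succ d ih =>
      obtain ⟨hle, hneg⟩ := ih
      have hneg' : s (m + d + 1) < 0 := lt_of_le_of_lt hle hneg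
      have h := hrec (m + d + 1) (by omega)
      have heq : m + d + 1 - 1 = m + d := by omega
      rw [heq] at h
      have : m + (d + 1) = m + d + 1 := by omega
      rw [this]
      constructor
      · rw [h]; nlinarith
      · exact hneg'
  have hmj2 : m ≤ j₂ := Nat.find_le ⟨h12, hn2⟩
  have : s j₃ < 0 := by
    have := (key (j₃ - m)).2
    rwa [Nat.add_sub_cancel' (by omega : m ≤ j₃)] at this
  linarith

/-- Fix an integer `n ≥ 4` and let `s₁, s₂, …` satisfy `s_{j+1} = (n−2)s_j − s_{j−1}`
for all `j ≥ 2`. Then the sequence changes sign at most once: there are no indices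
`j₁ < j₂ < j₃` (all `≥ 1`) with `s_{j₁} > 0`, `s_{j₂} < 0`, `s_{j₃} > 0`, and none
with `s_{j₁} < 0`, `s_{j₂} > 0`, `s_{j₃} < 0`. -/
theorem stmt_5 (n : ℤ) (hn : 4 ≤ n) (s : ℕ → ℝ)
    (hrec : ∀ j : ℕ, 2 ≤ j → s (j + 1) = ((n : ℝ) - 2) * s j - s (j - 1)) :
    (¬ ∃ j₁ j₂ j₃ : ℕ, 1 ≤ j₁ ∧ j₁ < j₂ ∧ j₂ < j₃ ∧
        0 < s j₁ ∧ s j₂ < 0 ∧ 0 < s j₃) ∧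
    (¬ ∃ j₁ j₂ j₃ : ℕ, 1 ≤ j₁ ∧ j₁ < j₂ ∧ j₂ < j₃ ∧
        s j₁ < 0 ∧ 0 < s j₂ ∧ s j₃ < 0) := by
  have hc : (2 : ℝ) ≤ (n : ℝ) - 2 := by
    have : (4 : ℝ) ≤ (n : ℝ) := by exact_mod_cast hn
    linarith
  constructor
  · exact stmt_5_aux _ hc s hrec
  · have h := stmt_5_aux _ hc (fun j => -s j)
      (fun j hj => by have := hrec j hj; beta_reduce; linarith)
    rintro ⟨j₁, j₂, j₃, h1, h12, h23, hp1, hn2, hp3⟩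
    exact h ⟨j₁, j₂, j₃, h1, h12, h23, by simpa using hp1, by simpa using hn2,
      by simpa using hp3⟩
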